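/- Let λ* < ∞ be the largest λ such that G_λ (all edges parameterized) has no negative-cost cycle, and let π be the shortest path potential for G_{λ*}. Then in G^π every edge has cost at least λ*, and there exists a cycle C all of whose edges have cost exactly λ* in G^π; hence C is a minimum mean cycle of G and the minimum cycle mean of G equals λ*. -/

import Mathlib

variable {V : Type*}

/-- `IsWalkFrom E s t p` : `p` is a list of edges forming a walk from `s` to `t`
in the directed graph with edge relation `E`. -/
def IsWalkFrom (E : V → V → Prop) : V → V → List (V × V) → Prop
  | s, t, [] => s = t
  | s, t, e :: p => E e.1 e.2 ∧ e.1 = s ∧ IsWalkFrom E e.2 t p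

/-- Total cost of a walk. -/
def walkCost (c : V × V → ℝ) (p : List (V × V)) : ℝ := (p.map c).sum

/-- The graph has a negative-cost (directed) cycle. -/
def HasNegCycle (E : V → V → Prop) (c : V × V → ℝ) : Prop :=
  ∃ v p, p ≠ [] ∧ IsWalkFrom E v v p ∧ walkCost c p < 0

/-- `v` is reachable from `s`. -/
def Reaches (E : V → V → Prop) (s v : V) : Prop := ∃ p, IsWalkFrom E s v p

/-- Edge costs of `G_lam`: the parameter `lam` is subtracted from the cost of each
parameterized edge (edges in `E'`). -/
def paramCost (c : V × V → ℝ) (E' : V × V → Prop) [DecidablePred E'] (lam : ℝ) :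
    V × V → ℝ :=
  fun e => c e - lam * (if E' e then 1 else 0)

/-- Number of parameterized edges on a walk. -/
def paramCount (E' : V × V → Prop) [DecidablePred E'] (p : List (V × V)) : ℕ :=
  p.countP fun e => decide (E' e)

/-- `t` is a shortest path tree from `s`: it assigns to each vertex a walk from `s`
of minimum cost. -/
def IsSPTree (E : V → V → Prop) (c : V × V → ℝ) (s : V) (t : V → List (V × V)) : Prop :=
  ∀ v, IsWalkFrom E s v (t v) ∧ ∀ q, IsWalkFrom E s v q → walkCost c (t v) ≤ walkCost c q


section AuxLemmas

variable {E : V → V → Prop}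

lemma walk_append : ∀ (p : List (V × V)) {q : List (V × V)} {s m t : V},
    IsWalkFrom E s m p → IsWalkFrom E m t q → IsWalkFrom E s t (p ++ q)
  | [], q, s, m, t, hp, hq => by
      simp only [IsWalkFrom] at hp; subst hp; simpa using hq
  | e :: p, q, s, m, t, hp, hq => by
      obtain ⟨h1, h2, h3⟩ := hp
      exact ⟨h1, h2, walk_append p h3 hq⟩

lemma walkCost_append (c : V × V → ℝ) (p q : List (V × V)) :
    walkCost c (p ++ q) = walkCost c p + walkCost c q := by
  simp [walkCost]

lemma walk_edges : ∀ (p : List (V × V)) {s t : V}, IsWalkFrom E s t p →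
    ∀ e ∈ p, E e.1 e.2
  | [], s, t, _, e, he => by simp at he
  | f :: p, s, t, h, e, he => by
      obtain ⟨h1, _, h3⟩ := h
      rcases List.mem_cons.1 he with rfl | he
      · exact h1
      · exact walk_edges p h3 e he

lemma walk_telescope (c : V × V → ℝ) (π : V → ℝ) :
    ∀ (p : List (V × V)) {s t : V}, IsWalkFrom E s t p →
    walkCost (fun e => c e + π e.1 - π e.2) p = walkCost c p + π s - π t
  | [], s, t, h => by
      simp only [IsWalkFrom] at h; subst h; simp [walkCost]
  | e :: p, s, t, h => by
      obtain ⟨h1, h2, h3⟩ := h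
      have ih := walk_telescope c π p h3
      simp only [walkCost, List.map_cons, List.sum_cons] at ih ⊢
      rw [ih, h2]; ring

lemma walkCost_sub (c : V × V → ℝ) (μ : ℝ) (p : List (V × V)) :
    walkCost (fun e => c e - μ) p = walkCost c p - μ * p.length := by
  induction p with
  | nil => simp [walkCost]
  | cons e p ih =>
      simp only [walkCost, List.map_cons, List.sum_cons, List.length_cons] at ih ⊢
      rw [ih]; push_cast; ring

lemma walkCost_ge (c : V × V → ℝ) (b : ℝ) :
    ∀ (p : List (V × V)), (∀ e ∈ p, b ≤ c e) → b * p.length ≤ walkCost c p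
  | [], _ => by simp [walkCost]
  | e :: p, h => by
      have ih := walkCost_ge c b p (fun f hf => h f (List.mem_cons_of_mem _ hf))
      have he := h e List.mem_cons_self
      simp only [walkCost, List.map_cons, List.sum_cons, List.length_cons] at ih ⊢
      push_cast; push_cast at ih; linarith

lemma walkCost_ge_extra (c : V × V → ℝ) (b δ : ℝ) :
    ∀ (p : List (V × V)), (∀ e ∈ p, b ≤ c e) → (∃ e ∈ p, b + δ ≤ c e) →
      b * p.length + δ ≤ walkCost c p
  | [], _, hex => by simp at hex
  | e :: p, h, hex => by
      have hboundp : ∀ f ∈ p, b ≤ c f := fun f hf => h f (List.mem_cons_of_mem _ hf)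
      simp only [walkCost, List.map_cons, List.sum_cons, List.length_cons]
      obtain ⟨f, hf, hfc⟩ := hex
      rcases List.mem_cons.1 hf with rfl | hf
      · have hg := walkCost_ge c b p hboundp
        simp only [walkCost] at hg
        push_cast; linarith
      · have hg := walkCost_ge_extra c b δ p hboundp ⟨f, hf, hfc⟩
        have he := h e List.mem_cons_self
        simp only [walkCost] at hg
        push_cast; push_cast at hg; linarith

lemma walkCost_const (c : V × V → ℝ) (b : ℝ) :
    ∀ (p : List (V × V)), (∀ e ∈ p, c e = b) → walkCost c p = b * p.length
  | [], _ => by simp [walkCost]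
  | e :: p, h => by
      have ih := walkCost_const c b p (fun f hf => h f (List.mem_cons_of_mem _ hf))
      simp only [walkCost, List.map_cons, List.sum_cons, List.length_cons] at ih ⊢
      rw [ih, h e List.mem_cons_self]; push_cast; ring

/-- The vertex reached after `i` steps along a walk starting at `s` with edge list `p`. -/
def vAt : V → List (V × V) → ℕ → V
  | s, _, 0 => s
  | s, [], _ + 1 => s
  | _, e :: p, i + 1 => vAt e.2 p i

@[simp] lemma vAt_zero (s : V) (p : List (V × V)) : vAt s p 0 = s := by
  cases p <;> rfl

lemma vAt_succ_eq : ∀ (p : List (V × V)) (s : V) (i : ℕ) (h : i < p.length),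
    vAt s p (i + 1) = (p.map Prod.snd)[i]'(by simpa using h)
  | e :: p, s, 0, _ => by simp [vAt]
  | e :: p, s, i + 1, h => by
      have h' : i < p.length := by simpa using Nat.lt_of_succ_lt_succ h
      have := vAt_succ_eq p e.2 i h'
      simp only [vAt, List.map_cons]
      rw [this]
      simp

lemma walk_take_drop : ∀ (p : List (V × V)) {s t : V}, IsWalkFrom E s t p →
    ∀ i, i ≤ p.length →
      IsWalkFrom E s (vAt s p i) (p.take i) ∧ IsWalkFrom E (vAt s p i) t (p.drop i)
  | p, s, t, h, 0, _ => by
      simp only [vAt_zero, List.take_zero, List.drop_zero]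
      exact ⟨rfl, h⟩
  | [], s, t, h, i + 1, hi => by simp at hi
  | e :: p, s, t, h, i + 1, hi => by
      obtain ⟨h1, h2, h3⟩ := h
      have hi' : i ≤ p.length := by simpa using hi
      have ih := walk_take_drop p h3 i hi'
      exact ⟨⟨h1, h2, ih.1⟩, ih.2⟩

lemma vAt_drop : ∀ (p : List (V × V)) (s : V) (i j : ℕ), i ≤ j → j ≤ p.length →
    vAt (vAt s p i) (p.drop i) (j - i) = vAt s p j := by
  intro p s i j hij hj
  rcases Nat.eq_or_lt_of_le hij with rfl | hlt
  · simp
  · have hji : j - i = (j - i - 1) + 1 := by omega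
    have h1 : j - i - 1 < (p.drop i).length := by simp; omega
    have h2 : j - 1 < p.length := by omega
    have hj' : j = (j - 1) + 1 := by omega
    rw [hji, vAt_succ_eq _ _ _ h1]
    conv_rhs => rw [hj', vAt_succ_eq _ _ _ h2]
    simp only [List.getElem_map, List.getElem_drop]
    congr 2
    omega

lemma exists_repeat [Fintype V] (p : List (V × V)) (s : V)
    (h : Fintype.card V < p.length) :
    ∃ i j, i < j ∧ j < p.length ∧ vAt s p i = vAt s p j := by
  classical
  have hnd : ¬ ((s :: p.map Prod.snd).take p.length).Nodup := by
    intro hnd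
    have := hnd.length_le_card
    simp [List.length_take] at this
    omega
  rw [List.nodup_iff_injective_get] at hnd
  simp only [Function.Injective, not_forall] at hnd
  obtain ⟨i, j, hget, hne⟩ := hnd
  have key : ∀ k : Fin ((s :: p.map Prod.snd).take p.length).length,
      ((s :: p.map Prod.snd).take p.length).get k = vAt s p (k : ℕ) := by
    rintro ⟨kv, hkv⟩
    have hk : kv < p.length := by
      simp [List.length_take] at hkv; omega
    simp only [List.get_eq_getElem, List.getElem_take]
    cases kv with
    | zero => simp
    | succ m =>
        have hm : m < p.length := by omega
        rw [vAt_succ_eq p s m hm]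
        simp
  have hij : (i : ℕ) ≠ (j : ℕ) := fun hh => hne (Fin.ext hh)
  have hjb : (j : ℕ) < p.length := by
    have := j.2; simp [List.length_take] at this; omega
  have hib : (i : ℕ) < p.length := by
    have := i.2; simp [List.length_take] at this; omega
  rcases Nat.lt_or_ge (i : ℕ) (j : ℕ) with hlt | hge
  · exact ⟨i, j, hlt, hjb, by rw [← key i, ← key j, hget]⟩
  · exact ⟨j, i, by omega, hib, by rw [← key i, ← key j, hget]⟩

lemma shorten [Fintype V] (c : V × V → ℝ) (μ : ℝ) :
    ∀ (n : ℕ) (K : List (V × V)) (u : V), K.length ≤ n → K ≠ [] →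
      IsWalkFrom E u u K → walkCost c K < μ * K.length →
      ∃ w K', K' ≠ [] ∧ K'.length ≤ Fintype.card V ∧ IsWalkFrom E w w K' ∧
        walkCost c K' < μ * K'.length := by
  intro n
  induction n with
  | zero =>
      intro K u hn hne _ _
      exact absurd (List.length_eq_zero_iff.1 (Nat.le_zero.1 hn)) hne
  | succ n ih =>
      intro K u hn hne hw hc
      by_cases hcard : K.length ≤ Fintype.card V
      · exact ⟨u, K, hne, hcard, hw, hc⟩
      · push_neg at hcard
        obtain ⟨i, j, hij, hjlen, hvv⟩ := exists_repeat K u hcard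
        obtain ⟨hw1, hw2⟩ := walk_take_drop K hw i (le_of_lt (lt_trans hij hjlen))
        obtain ⟨hw3, hw4⟩ := walk_take_drop (K.drop i) hw2 (j - i)
          (by simp [List.length_drop]; omega)
        rw [vAt_drop K u i j hij.le hjlen.le, ← hvv] at hw3 hw4
        have hdd : (K.drop i).drop (j - i) = K.drop j := by
          rw [List.drop_drop]; congr 1; omega
        rw [hdd] at hw4
        set K1 := (K.drop i).take (j - i) with hK1
        set K2 := K.take i ++ K.drop j with hK2
        have hwK2 : IsWalkFrom E u u K2 := walk_append _ hw1 hw4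
        have hlen1 : K1.length = j - i := by
          rw [hK1]; rw [List.length_take, List.length_drop]; omega
        have hlen2 : K2.length = K.length - (j - i) := by
          rw [hK2]; rw [List.length_append, List.length_take, List.length_drop]; omega
        have hsplit : K.take i ++ (K1 ++ K.drop j) = K := by
          rw [hK1, ← hdd, List.take_append_drop, List.take_append_drop]
        have hcost : walkCost c K1 + walkCost c K2 = walkCost c K := by
          calc walkCost c K1 + walkCost c K2
              = walkCost c (K.take i ++ (K1 ++ K.drop j)) := by
                rw [hK2, walkCost_append, walkCost_append, walkCost_append]; ring
            _ = walkCost c K := by rw [hsplit]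
        have hlensum : K1.length + K2.length = K.length := by omega
        have hlenR : (K1.length : ℝ) + (K2.length : ℝ) = (K.length : ℝ) := by
          exact_mod_cast congrArg (Nat.cast : ℕ → ℝ) hlensum
        have hmu : μ * (K1.length : ℝ) + μ * (K2.length : ℝ) = μ * (K.length : ℝ) := by
          rw [← mul_add, hlenR]
        have hsum : (walkCost c K1 - μ * K1.length) + (walkCost c K2 - μ * K2.length) < 0 := by
          linarith
        have hK1ne : K1 ≠ [] := by
          rw [← List.length_pos_iff]; omega
        have hK2ne : K2 ≠ [] := by
          rw [← List.length_pos_iff]; omega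
        rcases lt_or_ge (walkCost c K1 - μ * K1.length) 0 with hneg | hpos
        · exact ih K1 (vAt u K i) (by omega) hK1ne hw3 (by linarith)
        · exact ih K2 u (by omega) hK2ne hwK2 (by linarith)

end AuxLemmas

/-- Let `lam* < ∞` be the largest `lam` such that `G_lam` (all edges
parameterized) has no negative-cost cycle, and let `π` be the shortest path
potential for `G_{lam*}`. Then every edge of `G^π` has cost at least `lam*`, and
there is a cycle `C` all of whose edges have cost exactly `lam*` in `G^π`; `C` is a
minimum mean cycle of `G` and the minimum cycle mean of `G` equals `lam*`. -/
theorem stmt10 [Fintype V] (E : V → V → Prop) (c : V × V → ℝ) (s : V) (lamstar : ℝ)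
    (hcyc : ∃ u K, K ≠ [] ∧ IsWalkFrom E u u K)
    (hreach : ∀ v, Reaches E s v)
    (h1 : ¬ HasNegCycle E (fun e => c e - lamstar))
    (h2 : ∀ μ > lamstar, HasNegCycle E (fun e => c e - μ))
    (π : V → ℝ)
    (hπ : ∀ v, (∃ p, IsWalkFrom E s v p ∧ walkCost (fun e => c e - lamstar) p = π v) ∧
      ∀ p, IsWalkFrom E s v p → π v ≤ walkCost (fun e => c e - lamstar) p) :
    (∀ u v, E u v → lamstar ≤ c (u, v) + π u - π v) ∧
    ∃ u K, K ≠ [] ∧ IsWalkFrom E u u K ∧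
      (∀ e ∈ K, c e + π e.1 - π e.2 = lamstar) ∧
      (∀ w K', K' ≠ [] → IsWalkFrom E w w K' →
        walkCost c K / K.length ≤ walkCost c K' / K'.length) ∧
      walkCost c K / K.length = lamstar := by
  classical
  have hVne : Nonempty V := ⟨s⟩
  have partA : ∀ u v, E u v → lamstar ≤ c (u, v) + π u - π v := by
    intro u v huv
    obtain ⟨⟨p, hp, hpc⟩, _⟩ := hπ u
    have hw : IsWalkFrom E s v (p ++ [(u, v)]) :=
      walk_append p hp ⟨huv, rfl, rfl⟩
    have hle := (hπ v).2 _ hw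
    rw [walkCost_append] at hle
    have hsingle : walkCost (fun e => c e - lamstar) [(u, v)] = c (u, v) - lamstar := by
      simp [walkCost]
    rw [hsingle, hpc] at hle
    linarith
  set rc : V × V → ℝ := fun e => c e + π e.1 - π e.2 with hrc
  have rc_ge : ∀ e : V × V, E e.1 e.2 → lamstar ≤ rc e := by
    intro e he
    have := partA e.1 e.2 he
    simpa [hrc] using this
  have cyc_lb : ∀ (w : V) (K' : List (V × V)), IsWalkFrom E w w K' →
      lamstar * K'.length ≤ walkCost c K' := by
    intro w K' hw
    have ht := walk_telescope c π K' hw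
    have hge := walkCost_ge rc lamstar K' (fun e he => rc_ge e (walk_edges K' hw e he))
    rw [← hrc] at ht
    linarith
  have claim : ∃ u K, K ≠ [] ∧ IsWalkFrom E u u K ∧ ∀ e ∈ K, rc e = lamstar := by
    by_contra hCl
    push_neg at hCl
    set F : Finset (V × V) := Finset.univ.filter (fun e => E e.1 e.2 ∧ rc e ≠ lamstar)
      with hF
    by_cases hFe : F.Nonempty
    · set n := Fintype.card V with hn
      have hn1 : 1 ≤ n := Fintype.card_pos
      set δ := F.inf' hFe (fun e => rc e - lamstar) with hδ
      have hδpos : 0 < δ := by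
        rw [hδ, Finset.lt_inf'_iff]
        intro e he
        rw [hF, Finset.mem_filter] at he
        have h1 := rc_ge e he.2.1
        have h2 := he.2.2
        cases lt_or_eq_of_le h1 with
        | inl h => linarith
        | inr h => exact absurd h.symm h2
      have hμ : lamstar < lamstar + δ / (n + 1) := by
        have : (0 : ℝ) < δ / (n + 1) := by positivity
        linarith
      obtain ⟨v, p, hpne, hpw, hpc⟩ := h2 _ hμ
      rw [walkCost_sub] at hpc
      have hpc' : walkCost c p < (lamstar + δ / (n + 1)) * p.length := by linarith
      obtain ⟨w, K', hne', hlen', hw', hc'⟩ :=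
        shorten c _ p.length p v le_rfl hpne hpw hpc'
      obtain ⟨e, heK, hene⟩ := hCl w K' hne' hw'
      have heE : E e.1 e.2 := walk_edges K' hw' e heK
      have heF : e ∈ F := by
        rw [hF, Finset.mem_filter]
        exact ⟨Finset.mem_univ e, heE, hene⟩
      have hδle : δ ≤ rc e - lamstar := Finset.inf'_le _ heF
      have hextra : lamstar * K'.length + δ ≤ walkCost rc K' :=
        walkCost_ge_extra rc lamstar δ K'
          (fun f hf => rc_ge f (walk_edges K' hw' f hf))
          ⟨e, heK, by linarith⟩
      have ht := walk_telescope c π K' hw'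
      rw [← hrc] at ht
      have hlpos : 1 ≤ K'.length := by
        rcases Nat.eq_zero_or_pos K'.length with h0 | h0
        · exact absurd (List.length_eq_zero_iff.1 h0) hne'
        · exact h0
      have hlR : (1 : ℝ) ≤ (K'.length : ℝ) := by exact_mod_cast hlpos
      have hlnR : (K'.length : ℝ) ≤ (n : ℝ) := by exact_mod_cast hlen'
      have hfrac : δ * K'.length / (n + 1) < δ := by
        rw [div_lt_iff₀ (by positivity)]
        nlinarith
      have hexp : (lamstar + δ / (n + 1)) * (K'.length : ℝ) =
          lamstar * K'.length + δ * K'.length / (n + 1) := by ring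
      linarith [hc', hextra, ht, hfrac, hexp]
    · obtain ⟨u, K, hne, hw⟩ := hcyc
      obtain ⟨e, heK, hene⟩ := hCl u K hne hw
      have heF : e ∈ F := by
        rw [hF, Finset.mem_filter]
        exact ⟨Finset.mem_univ e, walk_edges K hw e heK, hene⟩
      exact hFe ⟨e, heF⟩
  obtain ⟨u, K, hKne, hKw, hKt⟩ := claim
  have hKlpos : 0 < K.length := List.length_pos_iff.2 hKne
  have hKlR : (0 : ℝ) < (K.length : ℝ) := by exact_mod_cast hKlpos
  have hKcost : walkCost c K = lamstar * K.length := by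
    have ht := walk_telescope c π K hKw
    rw [← hrc] at ht
    have hc := walkCost_const rc lamstar K hKt
    linarith
  have hKmean : walkCost c K / K.length = lamstar := by
    rw [hKcost]
    field_simp
  refine ⟨partA, u, K, hKne, hKw, hKt, ?_, hKmean⟩
  intro w K' hne' hw'
  rw [hKmean]
  have hlb := cyc_lb w K' hw'
  have hlpos : (0 : ℝ) < (K'.length : ℝ) := by
    exact_mod_cast List.length_pos_iff.2 hne'
  rw [le_div_iff₀ hlpos]
  exact hlb
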